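/- If {x_n} is a log-convex sequence of nonnegative real numbers, then the binomial transform z_n = ∑_{k=0}^{n} C(n,k) x_k is log-convex. -/

import Mathlib

def LogConvex (a : ℕ → ℝ) : Prop := ∀ n : ℕ, a n * a (n + 2) ≥ a (n + 1) ^ 2

lemma pascal_sum (f : ℕ → ℝ) (n : ℕ) :
    ∑ k ∈ Finset.range (n + 2), ((n + 1).choose k : ℝ) * f k
      = ∑ k ∈ Finset.range (n + 1), (n.choose k : ℝ) * f k
        + ∑ k ∈ Finset.range (n + 1), (n.choose k : ℝ) * f (k + 1) := by
  rw [Finset.sum_range_succ' _ (n + 1)]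
  have h1 : ∀ k ∈ Finset.range (n + 1),
      ((n + 1).choose (k + 1) : ℝ) * f (k + 1)
        = (n.choose k : ℝ) * f (k + 1) + (n.choose (k + 1) : ℝ) * f (k + 1) := by
    intro k _
    have : ((n + 1).choose (k + 1) : ℝ) = (n.choose k : ℝ) + (n.choose (k + 1) : ℝ) := by
      exact_mod_cast congrArg (Nat.cast : ℕ → ℝ) (Nat.choose_succ_succ n k)
    rw [this]; ring
  rw [Finset.sum_congr rfl h1, Finset.sum_add_distrib]
  have h2 : ∑ k ∈ Finset.range (n + 1), (n.choose (k + 1) : ℝ) * f (k + 1)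
      + ((n + 1).choose 0 : ℝ) * f 0
      = ∑ k ∈ Finset.range (n + 1), (n.choose k : ℝ) * f k := by
    have := (Finset.sum_range_succ' (fun k => (n.choose k : ℝ) * f k) (n + 1)).symm
    simp only [Nat.choose_zero_right, Nat.cast_one] at this ⊢
    rw [this, Finset.sum_range_succ]
    simp [Nat.choose_succ_self]
  linarith [h2]

theorem logConvex_binomial_transform (x : ℕ → ℝ)
    (hx0 : ∀ n, 0 ≤ x n) (hx : LogConvex x) :
    LogConvex (fun n => ∑ k ∈ Finset.range (n + 1), (n.choose k : ℝ) * x k) := by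
  intro n
  simp only
  set z := ∑ k ∈ Finset.range (n + 1), (n.choose k : ℝ) * x k with hz
  set w := ∑ k ∈ Finset.range (n + 1), (n.choose k : ℝ) * x (k + 1) with hw
  set v := ∑ k ∈ Finset.range (n + 1), (n.choose k : ℝ) * x (k + 2) with hv
  have hz1 : ∑ k ∈ Finset.range (n + 2), ((n + 1).choose k : ℝ) * x k = z + w :=
    pascal_sum x n
  have hw1 : ∑ k ∈ Finset.range (n + 2), ((n + 1).choose k : ℝ) * x (k + 1) = w + v :=
    pascal_sum (fun k => x (k + 1)) n
  have hz2 : ∑ k ∈ Finset.range (n + 3), ((n + 2).choose k : ℝ) * x k = z + w + (w + v) := by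
    have := pascal_sum x (n + 1)
    rw [this, hz1, hw1]
  -- Cauchy–Schwarz: w^2 ≤ z * v
  have hwnn : 0 ≤ w := Finset.sum_nonneg fun k _ =>
    mul_nonneg (Nat.cast_nonneg _) (hx0 _)
  have hcs : w ^ 2 ≤ z * v := by
    have key : (∑ k ∈ Finset.range (n + 1),
        (n.choose k : ℝ) * Real.sqrt (x k * x (k + 2))) ^ 2 ≤ z * v := by
      apply Finset.sum_sq_le_sum_mul_sum_of_sq_eq_mul
      · intro k _; exact mul_nonneg (Nat.cast_nonneg _) (hx0 _)
      · intro k _; exact mul_nonneg (Nat.cast_nonneg _) (hx0 _)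
      · intro k _
        rw [mul_pow, Real.sq_sqrt (mul_nonneg (hx0 _) (hx0 _))]
        ring
    have hle : w ≤ ∑ k ∈ Finset.range (n + 1),
        (n.choose k : ℝ) * Real.sqrt (x k * x (k + 2)) := by
      apply Finset.sum_le_sum
      intro k _
      apply mul_le_mul_of_nonneg_left _ (Nat.cast_nonneg _)
      rw [← Real.sqrt_sq (hx0 (k + 1))]
      exact Real.sqrt_le_sqrt (hx k)
    calc w ^ 2 ≤ (∑ k ∈ Finset.range (n + 1),
        (n.choose k : ℝ) * Real.sqrt (x k * x (k + 2))) ^ 2 := by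
          apply pow_le_pow_left₀ hwnn hle
      _ ≤ z * v := key
  show z * (∑ k ∈ Finset.range (n + 3), ((n + 2).choose k : ℝ) * x k)
      ≥ (∑ k ∈ Finset.range (n + 2), ((n + 1).choose k : ℝ) * x k) ^ 2
  rw [hz1, hz2]
  nlinarith [hcs]
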